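/- arXiv:2602.07486 — 4 statements merged into one kernel-verified Lean document; each statement's English description precedes it below -/
import Mathlib

section
/- Let Pf, Pm, γf, γm, ATEf, ATEm be real numbers with Pf ≠ 0, Pm ≠ 0, Pf − γf ≠ 0, Pm − γm ≠ 0, and suppose the NTD assumption γf/Pf = γm/Pm holds. Define θg = ATEg/Pg and the normalized DID estimand δθ(g) = (ATEg + γg)/(Pg − γg) for g ∈ {f, m}. Then δθ(f) − δθ(m) = Bias · (θf − θm), where Bias = Pf/(Pf − γf) = Pm/(Pm − γm). In particular, the descriptive gender gap in normalized DID equals a gender-invariant multiplicative bias factor times the causal gender gap in normalized effects. -/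
/-- Theorem 1 (bias characterization): under Assumption NTD-PT, the descriptive gender gap in
normalized DID equals a gender-invariant multiplicative bias factor times the causal gender
gap in normalized effects. -/
theorem stmt_4 (Pf Pm γf γm ATEf ATEm : ℝ)
    (hPf : Pf ≠ 0) (hPm : Pm ≠ 0)
    (hf : Pf - γf ≠ 0) (hm : Pm - γm ≠ 0)
    (hNTD : γf / Pf = γm / Pm)
    (θf θm δθf δθm : ℝ)
    (hθf : θf = ATEf / Pf) (hθm : θm = ATEm / Pm)
    (hδθf : δθf = (ATEf + γf) / (Pf - γf))
    (hδθm : δθm = (ATEm + γm) / (Pm - γm)) :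
    δθf - δθm = (Pf / (Pf - γf)) * (θf - θm) ∧
      Pf / (Pf - γf) = Pm / (Pm - γm) := by
  have key : γf * Pm = γm * Pf := by
    field_simp at hNTD
    linarith
  have bias : Pf / (Pf - γf) = Pm / (Pm - γm) := by
    field_simp
    linarith
  have hγ : γf / (Pf - γf) = γm / (Pm - γm) := by
    field_simp
    linarith
  refine ⟨?_, bias⟩
  have h1 : δθf = ATEf / (Pf - γf) + γf / (Pf - γf) := by
    rw [hδθf, ← add_div]
  have h2 : δθm = ATEm / (Pm - γm) + γm / (Pm - γm) := by
    rw [hδθm, ← add_div]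
  have h3 : (Pf / (Pf - γf)) * θf = ATEf / (Pf - γf) := by
    rw [hθf]; field_simp
  have h4 : (Pf / (Pf - γf)) * θm = ATEm / (Pm - γm) := by
    rw [bias, hθm]; field_simp
  rw [h1, h2, mul_sub, h3, h4, hγ]; ring
end

section
/- Let Pf, γf, γm, ATEf, ATEm be real numbers with Pf ≠ 0 and Pf − γf ≠ 0. Define P = (ATEf − ATEm)/Pf and δP = ((ATEf + γf) − (ATEm + γm))/(Pf − γf). Then δP = P · Bias1 + Bias2, where Bias1 = Pf/(Pf − γf) and Bias2 = (γf − γm)/(Pf − γf). -/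
/-- Lemma C.2: the descriptive DID analogue of the Kleven–Landais–Søgaard child-penalty
estimand equals the causal estimand times a multiplicative bias plus an additive bias. -/
theorem stmt_5 (Pf γf γm ATEf ATEm : ℝ)
    (hPf : Pf ≠ 0) (hf : Pf - γf ≠ 0)
    (P δP Bias1 Bias2 : ℝ)
    (hP : P = (ATEf - ATEm) / Pf)
    (hδP : δP = ((ATEf + γf) - (ATEm + γm)) / (Pf - γf))
    (hB1 : Bias1 = Pf / (Pf - γf))
    (hB2 : Bias2 = (γf - γm) / (Pf - γf)) :
    δP = P * Bias1 + Bias2 := by subst hP hδP hB1 hB2; field_simp; ring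
end

section
/- Let Pf, Pm, γf, γm, ATEf, ATEm be real numbers with Pf ≠ 0, Pm ≠ 0, Pf − γf ≠ 0, Pm − γm ≠ 0, and suppose the NTD assumption γf/Pf = γm/Pm holds. Define θg = ATEg/Pg, δθ(g) = (ATEg + γg)/(Pg − γg), and δAPO(m) = Pm − γm. Then θf − θm = (δθ(f) − δθ(m)) · δAPO(m)/Pm. That is, if fathers' counterfactual average potential outcome Pm is known, then the causal gender gap in normalized effects is identified by multiplying the descriptive gender gap in normalized DID by the ratio of the DID counterfactual mean for fathers to fathers' true counterfactual mean. -/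
/-- Proposition 2 (bias correction): under Assumption NTD-PT, if fathers' counterfactual
average potential outcome is known, the causal gender gap in normalized effects is obtained
by multiplying the descriptive gender gap in normalized DID by the ratio of the DID
counterfactual mean for fathers to fathers' true counterfactual mean. -/
theorem stmt_6 (Pf Pm γf γm ATEf ATEm : ℝ)
    (hPf : Pf ≠ 0) (hPm : Pm ≠ 0)
    (hf : Pf - γf ≠ 0) (hm : Pm - γm ≠ 0)
    (hNTD : γf / Pf = γm / Pm)
    (θf θm δθf δθm δAPOm : ℝ)
    (hθf : θf = ATEf / Pf) (hθm : θm = ATEm / Pm)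
    (hδθf : δθf = (ATEf + γf) / (Pf - γf))
    (hδθm : δθm = (ATEm + γm) / (Pm - γm))
    (hδAPOm : δAPOm = Pm - γm) :
    θf - θm = (δθf - δθm) * (δAPOm / Pm) := by
  subst hθf hθm hδθf hδθm hδAPOm
  have hγ : γf = γm * Pf / Pm := by
    rw [div_eq_div_iff hPf hPm] at hNTD
    field_simp
    linarith
  subst hγ
  have key : Pf - γm * Pf / Pm = Pf * (Pm - γm) / Pm := by
    field_simp
  rw [key]
  rw [div_div_eq_mul_div]
  have hPfm : Pf * (Pm - γm) ≠ 0 := mul_ne_zero hPf hm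
  field_simp
  ring
end

section
/- Let Pf, Pm, γf, γm, Rf, Rm be real numbers with Pf ≠ 0, Pm ≠ 0, Rm ≠ 0, Pm − γm ≠ 0, and suppose the NTD assumption γf/Pf = γm/Pm holds. Define the counterfactual gender earnings ratio ρ∞ = Pf/Pm, the realized gender earnings ratio ρd = Rf/Rm, the effect of parenthood on the gender earnings ratio Δρ = ρd − ρ∞, and the DID counterfactual means δAPO(f) = Pf − γf, δAPO(m) = Pm − γm. Then (Pf − γf)/(Pm − γm) = Pf/Pm, and consequently Δρ = Rf/Rm − δAPO(f)/δAPO(m). That is, the effect of parenthood on the gender earnings ratio is identified by the observed gender earnings ratio minus the ratio of the DID counterfactual means across genders. -/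
/-- Theorem 2 (identification of the effect of parenthood on the gender earnings ratio):
under Assumption NTD-PT, the gender ratio of DID counterfactual means equals the true
counterfactual gender earnings ratio, and hence the effect of parenthood on the gender
earnings ratio is identified by the observed gender earnings ratio minus the gender ratio
of DID counterfactual means. -/
theorem stmt_7 (Pf Pm γf γm Rf Rm : ℝ)
    (hPf : Pf ≠ 0) (hPm : Pm ≠ 0) (hRm : Rm ≠ 0) (hm : Pm - γm ≠ 0)
    (hNTD : γf / Pf = γm / Pm)
    (ρinf ρd Δρ δAPOf δAPOm : ℝ)
    (hρinf : ρinf = Pf / Pm) (hρd : ρd = Rf / Rm)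
    (hΔρ : Δρ = ρd - ρinf)
    (hδAPOf : δAPOf = Pf - γf) (hδAPOm : δAPOm = Pm - γm) :
    (Pf - γf) / (Pm - γm) = Pf / Pm ∧ Δρ = Rf / Rm - δAPOf / δAPOm := by
  have key : (Pf - γf) / (Pm - γm) = Pf / Pm := by
    have h : γf * Pm = γm * Pf := by
      field_simp at hNTD; linarith
    field_simp
    ring_nf
    nlinarith [h]
  exact ⟨key, by rw [hΔρ, hρd, hρinf, hδAPOf, hδAPOm, key]⟩
end
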